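/- Let η : ℤ → ℤ be a function such that min_{x ≤ b} η(x) exists for every b ∈ ℤ, and define ν̃(b) := min_{x ≤ b} η(x) and ξ̃(a) := 1 if η(x) > η(a) for all x < a, and ξ̃(a) := 0 otherwise. Fix a ∈ ℤ with η(a) > η(a+1) and let η' be obtained from η by swapping the values at a and a+1 (η'(a) = η(a+1), η'(a+1) = η(a), η' = η elsewhere). Then with ν̃', ξ̃' defined analogously from η': (i) ν̃'(b) = ν̃(b) for all b ≠ a, and ν̃'(a) = ν̃(a+1); (ii) it is impossible that ξ̃(a) = 1 and ξ̃(a+1) = 0; (iii) if ξ̃(a+1) = 1 then ξ̃'(a) = 1 and ξ̃'(a+1) = 0, while if ξ̃(a) = ξ̃(a+1) = 0 then ξ̃' = ξ̃. -/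
import Mathlib


/-- TASEP swap at bond `(a, a+1)` induces the voter/coalescence update.
`η` is the TASEP configuration, `ν` the voter projection (min of `η` weakly to the left),
`ξ` the coalescence projection (`ξ a = 1` iff `η a` is smaller than all values strictly left).
`η'` is `η` with the values at `a` and `a+1` swapped (allowed since `η a > η (a+1)`), and
`ν', ξ'` are its projections. -/
theorem tasep_voter_coalescence_update
    (η η' : ℤ → ℤ) (ν ν' : ℤ → ℤ) (ξ ξ' : ℤ → ℕ) (a : ℤ)
    (hswap : η a > η (a + 1))
    (hη' : η' a = η (a + 1) ∧ η' (a + 1) = η a ∧ ∀ y : ℤ, y ≠ a → y ≠ a + 1 → η' y = η y)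
    (hν : ∀ b : ℤ, (∃ x ≤ b, η x = ν b) ∧ ∀ x ≤ b, ν b ≤ η x)
    (hν' : ∀ b : ℤ, (∃ x ≤ b, η' x = ν' b) ∧ ∀ x ≤ b, ν' b ≤ η' x)
    (hξ : ∀ c : ℤ, (ξ c = 1 ↔ ∀ x < c, η c < η x) ∧ (ξ c = 0 ∨ ξ c = 1))
    (hξ' : ∀ c : ℤ, (ξ' c = 1 ↔ ∀ x < c, η' c < η' x) ∧ (ξ' c = 0 ∨ ξ' c = 1)) :
    -- (i) voter update
    ((∀ b : ℤ, b ≠ a → ν' b = ν b) ∧ ν' a = ν (a + 1)) ∧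
    -- (ii) the case ξ a = 1, ξ (a+1) = 0 is impossible
    ¬ (ξ a = 1 ∧ ξ (a + 1) = 0) ∧
    -- (iii) coalescence update
    ((ξ (a + 1) = 1 → ξ' a = 1 ∧ ξ' (a + 1) = 0) ∧
      (ξ a = 0 ∧ ξ (a + 1) = 0 → ∀ c : ℤ, ξ' c = ξ c)) := by
  obtain ⟨ha', ha1', hother⟩ := hη'
  refine ⟨⟨?_, ?_⟩, ?_, ?_, ?_⟩
  · -- (i) b ≠ a
    intro b hb
    obtain ⟨⟨x₀, hx₀b, hx₀⟩, hmin⟩ := hν b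
    obtain ⟨⟨x₁, hx₁b, hx₁⟩, hmin'⟩ := hν' b
    apply le_antisymm
    · rcases eq_or_ne x₀ a with rfl | h1
      · calc ν' b ≤ η' (x₀ + 1) := hmin' _ (by omega)
          _ = η x₀ := ha1'
          _ = ν b := hx₀
      · rcases eq_or_ne x₀ (a + 1) with rfl | h2
        · calc ν' b ≤ η' a := hmin' _ (by omega)
            _ = η (a + 1) := ha'
            _ = ν b := hx₀
        · calc ν' b ≤ η' x₀ := hmin' _ hx₀b
            _ = η x₀ := hother _ h1 h2
            _ = ν b := hx₀
    · rcases eq_or_ne x₁ a with rfl | h1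
      · calc ν b ≤ η (x₁ + 1) := hmin _ (by omega)
          _ = η' x₁ := ha'.symm
          _ = ν' b := hx₁
      · rcases eq_or_ne x₁ (a + 1) with rfl | h2
        · calc ν b ≤ η a := hmin _ (by omega)
            _ = η' (a + 1) := ha1'.symm
            _ = ν' b := hx₁
        · calc ν b ≤ η x₁ := hmin _ hx₁b
            _ = η' x₁ := (hother _ h1 h2).symm
            _ = ν' b := hx₁
  · -- (i) ν' a = ν (a+1)
    obtain ⟨⟨x₀, hx₀b, hx₀⟩, hmin⟩ := hν (a + 1)
    obtain ⟨⟨x₁, hx₁b, hx₁⟩, hmin'⟩ := hν' a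
    apply le_antisymm
    · rcases eq_or_ne x₀ (a + 1) with rfl | h2
      · calc ν' a ≤ η' a := hmin' _ le_rfl
          _ = η (a + 1) := ha'
          _ = ν (a + 1) := hx₀
      · rcases eq_or_ne x₀ a with rfl | h1
        · exfalso
          have h := hmin (x₀ + 1) le_rfl
          omega
        · calc ν' a ≤ η' x₀ := hmin' _ (by omega)
            _ = η x₀ := hother _ h1 h2
            _ = ν (a + 1) := hx₀
    · rcases eq_or_ne x₁ a with rfl | h1
      · calc ν (x₁ + 1) ≤ η (x₁ + 1) := hmin _ le_rfl
          _ = η' x₁ := ha'.symm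
          _ = ν' x₁ := hx₁
      · have h2 : x₁ ≠ a + 1 := by omega
        calc ν (a + 1) ≤ η x₁ := hmin _ (by omega)
          _ = η' x₁ := (hother _ h1 h2).symm
          _ = ν' a := hx₁
  · -- (ii)
    rintro ⟨h1, h0⟩
    have H := (hξ a).1.mp h1
    have : ξ (a + 1) = 1 := by
      refine (hξ (a + 1)).1.mpr fun x hx => ?_
      rcases eq_or_ne x a with rfl | hxa
      · exact hswap
      · exact lt_trans hswap (H x (by omega))
    omega
  · -- (iii) first part
    intro h1
    have H := (hξ (a + 1)).1.mp h1
    constructor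
    · refine (hξ' a).1.mpr fun x hx => ?_
      rw [ha', hother x (by omega) (by omega)]
      exact H x (by omega)
    · rcases (hξ' (a + 1)).2 with h | h
      · exact h
      · exfalso
        have := (hξ' (a + 1)).1.mp h a (by omega)
        rw [ha', ha1'] at this
        omega
  · -- (iii) second part
    rintro ⟨h0a, h0a1⟩ c
    have hne : ¬ ∀ x < a + 1, η (a + 1) < η x := fun h => by
      have := (hξ (a + 1)).1.mpr h; omega
    push_neg at hne
    obtain ⟨w, hwlt, hwle⟩ := hne
    have hwa : w < a := by
      by_contra h
      have : w = a := by omega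
      subst this
      omega
    rcases eq_or_ne c a with rfl | hca
    · rw [h0a]
      rcases (hξ' c).2 with h' | h'
      · exact h'
      · exfalso
        have := (hξ' c).1.mp h' w hwa
        rw [ha', hother w (by omega) (by omega)] at this
        omega
    rcases eq_or_ne c (a + 1) with rfl | hca1
    · rw [h0a1]
      rcases (hξ' (a + 1)).2 with h' | h'
      · exact h'
      · exfalso
        have := (hξ' (a + 1)).1.mp h' w (by omega)
        rw [ha1', hother w (by omega) (by omega)] at this
        omega
    have hc' : η' c = η c := hother c hca hca1
    have key : (∀ x < c, η' c < η' x) ↔ (∀ x < c, η c < η x) := by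
      constructor
      · intro H x hx
        rcases eq_or_ne x a with rfl | h1
        · have := H (x + 1) (by omega)
          rw [hc', ha1'] at this; exact this
        · rcases eq_or_ne x (a + 1) with rfl | h2
          · have := H a (by omega)
            rw [hc', ha'] at this; exact this
          · have := H x hx
            rw [hc', hother x h1 h2] at this; exact this
      · intro H x hx
        rw [hc']
        rcases eq_or_ne x a with rfl | h1
        · rw [ha']; exact H (x + 1) (by omega)
        · rcases eq_or_ne x (a + 1) with rfl | h2
          · rw [ha1']; exact H a (by omega)
          · rw [hother x h1 h2]; exact H x hx
    have hiff : ξ' c = 1 ↔ ξ c = 1 := ((hξ' c).1).trans (key.trans ((hξ c).1).symm)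
    rcases (hξ' c).2 with h' | h'
    · rcases (hξ c).2 with h | h
      · rw [h, h']
      · have := hiff.mpr h; omega
    · exact h'.trans (hiff.mp h').symm
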